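/- Let L_g be a real symmetric positive definite |F| × |F| matrix whose smallest eigenvalue satisfies λ_1(L_g) ≥ 1 (as holds under the minimally dense arrangement of reference vehicles). For every ω ∈ ℝ the complex matrix (iω)²·I + (1 + iω)·L_g is invertible, and the H∞ norm of the transfer function G(s) = (s²·I + (s+1)·L_g)⁻¹ from disturbances to position errors of the network formation dynamics, namely sup_{ω∈ℝ} ‖((iω)²·I + (1 + iω)·L_g)⁻¹‖ in the operator norm induced by the Euclidean norm, is at most 2/√3. -/

import Mathlib

open scoped Matrix ComplexOrder


lemma aux_lower_bound {F : Type*} [Fintype F] [DecidableEq F]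
    {A : Matrix F F ℂ} (hpsd : (A - 1).PosSemidef)
    (ω : ℝ) (x : EuclideanSpace ℂ F) :
    Real.sqrt 3 / 2 * ‖x‖ ≤
      ‖Matrix.toEuclideanCLM (𝕜 := ℂ) ((Complex.I * (ω : ℂ)) ^ 2 • (1 : Matrix F F ℂ)
          + (1 + Complex.I * (ω : ℂ)) • A) x‖ := by
  classical
  set c : ℂ := (Complex.I * (ω : ℂ)) ^ 2 with hcdef
  set d : ℂ := 1 + Complex.I * (ω : ℂ) with hddef
  set T := Matrix.toEuclideanCLM (𝕜 := ℂ) A with hTdef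
  set v := T x with hvdef
  set t : ℝ := (inner ℂ x v : ℂ).re with htdef
  have hxim : ((‖x‖ : ℂ) ^ 2).im = 0 := by rw [← Complex.ofReal_pow]; exact Complex.ofReal_im _
  have hxre : ((‖x‖ : ℂ) ^ 2).re = ‖x‖ ^ 2 := by rw [← Complex.ofReal_pow]; exact Complex.ofReal_re _
  have h1' : dotProduct (star (WithLp.equiv 2 _ x)) (A *ᵥ (WithLp.equiv 2 _ x))
      = (inner ℂ x v : ℂ) := by
    rw [EuclideanSpace.inner_eq_star_dotProduct, dotProduct_comm, hvdef, hTdef,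
      Matrix.ofLp_toEuclideanCLM]
    rfl
  have h2' : dotProduct (star (WithLp.equiv 2 _ x)) (WithLp.equiv 2 _ x)
      = (‖x‖ : ℂ) ^ 2 := by
    rw [dotProduct_comm, ← EuclideanSpace.inner_eq_star_dotProduct, inner_self_eq_norm_sq_to_K]
    norm_cast
  have hdot : dotProduct (star (WithLp.equiv 2 _ x)) ((A - 1) *ᵥ (WithLp.equiv 2 _ x))
      = (inner ℂ x v : ℂ) - (‖x‖ : ℂ) ^ 2 := by
    rw [Matrix.sub_mulVec, Matrix.one_mulVec, dotProduct_sub, h1', h2']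
  have h0 := hpsd.dotProduct_mulVec_nonneg (WithLp.equiv 2 _ x)
  rw [hdot, Complex.le_def] at h0
  simp only [Complex.zero_im, Complex.zero_re, Complex.sub_im, Complex.sub_re, hxim, hxre] at h0
  have him : (inner ℂ x v : ℂ).im = 0 := by linarith [h0.2]
  have hre : ‖x‖ ^ 2 ≤ t := by rw [htdef]; linarith [h0.1]
  have hinner : (inner ℂ x v : ℂ) = (t : ℂ) := by
    rw [← Complex.re_add_im (inner ℂ x v : ℂ), him]
    simp only [Complex.ofReal_zero, zero_mul, add_zero]
    rfl
  have hSx : Matrix.toEuclideanCLM (𝕜 := ℂ) (c • (1 : Matrix F F ℂ) + d • A) x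
      = c • x + d • v := by
    rw [map_add, map_smul, map_smul, map_one]
    simp [hvdef, hTdef]
  rw [hSx]
  -- norms of the scalars
  have hc : c = -((ω : ℂ) ^ 2) := by rw [hcdef, mul_pow, Complex.I_sq]; ring
  have hnc : ‖c‖ = ω ^ 2 := by
    rw [hc, norm_neg, norm_pow, Complex.norm_real, Real.norm_eq_abs, sq_abs]
    try ring
  have hnd : ‖d‖ ^ 2 = 1 + ω ^ 2 := by
    rw [hddef, Complex.sq_norm, Complex.normSq_apply]
    simp
    ring
  -- cross term
  have hcross : ((inner ℂ (c • x) (d • v) : ℂ)).re = -(ω ^ 2) * t := by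
    rw [inner_smul_left, inner_smul_right, hinner, hc, hddef]
    simp [Complex.mul_re, Complex.mul_im, Complex.conj_ofReal, ← Complex.ofReal_pow]
    try ring
  -- expand the square of the norm
  have hns : ‖c • x + d • v‖ ^ 2
      = ω ^ 4 * ‖x‖ ^ 2 + 2 * (-(ω ^ 2) * t) + (1 + ω ^ 2) * ‖v‖ ^ 2 := by
    rw [@norm_add_sq ℂ _ _ _ _ (c • x) (d • v)]
    rw [norm_smul, norm_smul, hnc]
    simp only [RCLike.re_to_complex]
    rw [hcross]
    rw [mul_pow, mul_pow, hnd]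
    ring
  -- the quadratic inequality
  have hvx : 0 ≤ ‖v‖ ^ 2 - 2 * t + ‖x‖ ^ 2 := by
    have h := sq_nonneg (‖v - x‖)
    rw [@norm_sub_sq ℂ _ _ _ _ v x] at h
    have : (inner ℂ v x : ℂ).re = t := by
      rw [← inner_conj_symm, hinner]
      simp
    simp only [RCLike.re_to_complex, this] at h
    linarith
  have hfinal : 3 / 4 * ‖x‖ ^ 2 ≤ ‖c • x + d • v‖ ^ 2 := by
    rw [hns]
    nlinarith [mul_nonneg (by positivity : (0:ℝ) ≤ 1 + ω ^ 2) hvx, hre,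
      mul_nonneg (sq_nonneg (ω ^ 2 - 1 / 2)) (sq_nonneg ‖x‖), sq_nonneg ω]
  have ha : 0 ≤ Real.sqrt 3 / 2 * ‖x‖ := by positivity
  calc Real.sqrt 3 / 2 * ‖x‖ = Real.sqrt ((Real.sqrt 3 / 2 * ‖x‖) ^ 2) :=
        (Real.sqrt_sq ha).symm
    _ ≤ Real.sqrt (‖c • x + d • v‖ ^ 2) := by
        apply Real.sqrt_le_sqrt
        have h3 : (Real.sqrt 3 / 2 * ‖x‖) ^ 2 = 3 / 4 * ‖x‖ ^ 2 := by
          rw [mul_pow, div_pow, Real.sq_sqrt (by norm_num : (3:ℝ) ≥ 0)]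
          ring
        rw [h3]; exact hfinal
    _ = ‖c • x + d • v‖ := Real.sqrt_sq (norm_nonneg _)


/-- if `L_g` is real symmetric positive definite with smallest eigenvalue
`λ₁(L_g) ≥ 1`, then for every `ω ∈ ℝ` the matrix `(iω)²·I + (1+iω)·L_g` is invertible and
the `H∞` norm of `G(s) = (s²·I + (s+1)·L_g)⁻¹` (in the operator norm induced by the
Euclidean norm) is at most `2/√3`. -/
theorem formation_hinf_norm_le {F : Type*} [Fintype F] [DecidableEq F] [Nonempty F]
    (Lg : Matrix F F ℝ) (hPD : Lg.PosDef)
    (hone : 1 ≤ ⨅ i, hPD.1.eigenvalues i) :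
    (∀ ω : ℝ, IsUnit ((Complex.I * (ω : ℂ)) ^ 2 • (1 : Matrix F F ℂ)
        + (1 + Complex.I * (ω : ℂ)) • Lg.map Complex.ofReal)) ∧
    (⨆ ω : ℝ, ‖Matrix.toEuclideanCLM (𝕜 := ℂ)
        (((Complex.I * (ω : ℂ)) ^ 2 • (1 : Matrix F F ℂ)
          + (1 + Complex.I * (ω : ℂ)) • Lg.map Complex.ofReal)⁻¹)‖)
      ≤ 2 / Real.sqrt 3 := by
  classical
  set A : Matrix F F ℂ := Lg.map Complex.ofReal with hAdef
  -- each eigenvalue is at least 1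
  have hEig : ∀ i, (1 : ℝ) ≤ hPD.1.eigenvalues i := fun i =>
    le_trans hone (ciInf_le (Finite.bddBelow_range _) i)
  -- Lg - 1 is positive semidefinite over ℝ
  have hR : (Lg - 1).PosSemidef := by
    have hdiag : (Matrix.diagonal (fun i => hPD.1.eigenvalues i - 1) : Matrix F F ℝ).PosSemidef :=
      Matrix.PosSemidef.diagonal (fun i => sub_nonneg.mpr (hEig i))
    have h2 := hdiag.mul_mul_conjTranspose_same (hPD.1.eigenvectorUnitary : Matrix F F ℝ)
    have hU : (hPD.1.eigenvectorUnitary : Matrix F F ℝ)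
        * (star (hPD.1.eigenvectorUnitary : Matrix F F ℝ)) = 1 :=
      Matrix.mem_unitaryGroup_iff.mp (hPD.1.eigenvectorUnitary).2
    have hsub : Lg - 1 = (hPD.1.eigenvectorUnitary : Matrix F F ℝ)
        * Matrix.diagonal (fun i => hPD.1.eigenvalues i - 1)
        * (hPD.1.eigenvectorUnitary : Matrix F F ℝ)ᴴ := by
      have hdd : Matrix.diagonal (fun i => hPD.1.eigenvalues i - 1)
          = Matrix.diagonal (RCLike.ofReal ∘ hPD.1.eigenvalues) - 1 := by
        rw [← Matrix.diagonal_one, Matrix.diagonal_sub]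
        rfl
      rw [hdd, Matrix.mul_sub, Matrix.sub_mul, Matrix.mul_one]
      rw [← Matrix.star_eq_conjTranspose, hU]
      congr 1
      exact hPD.1.spectral_theorem
    rw [hsub]
    exact h2
  -- transfer positive semidefiniteness to ℂ
  obtain ⟨B, hB⟩ : ∃ B : Matrix F F ℝ, Lg - 1 = Bᴴ * B := by
    refine ⟨Matrix.diagonal (fun i => Real.sqrt (hR.1.eigenvalues i))
      * (hR.1.eigenvectorUnitary : Matrix F F ℝ)ᴴ, ?_⟩
    rw [Matrix.conjTranspose_mul, Matrix.conjTranspose_conjTranspose, Matrix.diagonal_conjTranspose,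
      Matrix.mul_assoc, ← Matrix.mul_assoc (Matrix.diagonal _), Matrix.diagonal_mul_diagonal,
      ← Matrix.mul_assoc]
    conv_lhs => rw [hR.1.spectral_theorem]
    rw [Unitary.conjStarAlgAut_apply, Matrix.star_eq_conjTranspose]
    congr 3
    funext i
    simp [Real.mul_self_sqrt (hR.eigenvalues_nonneg i)]
  have hC : (A - 1).PosSemidef := by
    have hmap : (Lg - 1).map Complex.ofReal = A - 1 := by
      rw [Matrix.map_sub _ (fun a b => by push_cast; ring)]
      congr 1
      ext i j
      simp [Matrix.one_apply, apply_ite Complex.ofReal]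
    have hmap2 : (Bᴴ * B).map Complex.ofReal
        = (B.map Complex.ofReal)ᴴ * (B.map Complex.ofReal) := by
      have := congrArg (fun M => Complex.ofRealHom.mapMatrix M) hB
      rw [← Matrix.conjTranspose_map Complex.ofReal (fun a => (Complex.conj_ofReal a).symm)]
      exact (RingHom.mapMatrix Complex.ofRealHom).map_mul Bᴴ B
    have : A - 1 = (B.map Complex.ofReal)ᴴ * (B.map Complex.ofReal) := by
      rw [← hmap, hB, hmap2]
    rw [this]
    exact Matrix.posSemidef_conjTranspose_mul_self _
  have key : ∀ (ω : ℝ) (x : EuclideanSpace ℂ F), Real.sqrt 3 / 2 * ‖x‖ ≤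
      ‖Matrix.toEuclideanCLM (𝕜 := ℂ) ((Complex.I * (ω : ℂ)) ^ 2 • (1 : Matrix F F ℂ)
          + (1 + Complex.I * (ω : ℂ)) • A) x‖ := fun ω x => aux_lower_bound hC ω x
  have h3 : (0 : ℝ) < Real.sqrt 3 := by positivity
  have hunit : ∀ ω : ℝ, IsUnit ((Complex.I * (ω : ℂ)) ^ 2 • (1 : Matrix F F ℂ)
      + (1 + Complex.I * (ω : ℂ)) • A) := by
    intro ω
    set M := (Complex.I * (ω : ℂ)) ^ 2 • (1 : Matrix F F ℂ)
      + (1 + Complex.I * (ω : ℂ)) • A with hMdef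
    rw [← Matrix.mulVec_injective_iff_isUnit]
    have hker : ∀ z : F → ℂ, M *ᵥ z = 0 → z = 0 := by
      intro z hz
      have hb := key ω ((WithLp.equiv 2 _).symm z)
      rw [Matrix.toEuclideanCLM_toLp] at hb
      erw [hz] at hb
      have h00 : (WithLp.toLp 2 (0 : F → ℂ) : EuclideanSpace ℂ F) = 0 := rfl
      rw [h00, norm_zero] at hb
      have hb2 : ‖(WithLp.equiv 2 (F → ℂ)).symm z‖ ≤ 0 := by
        by_contra hcon
        push_neg at hcon
        nlinarith
      have : (WithLp.equiv 2 (F → ℂ)).symm z = 0 :=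
        norm_le_zero_iff.mp hb2
      simpa using congrArg (WithLp.equiv 2 (F → ℂ)) this
    intro u w huw
    have := hker (u - w) (by rw [Matrix.mulVec_sub, huw, sub_self])
    exact sub_eq_zero.mp this
  refine ⟨hunit, ciSup_le fun ω => ?_⟩
  set M := (Complex.I * (ω : ℂ)) ^ 2 • (1 : Matrix F F ℂ)
    + (1 + Complex.I * (ω : ℂ)) • A with hMdef
  have hdet := (Matrix.isUnit_iff_isUnit_det _).mp (hunit ω)
  have hMinv : M * M⁻¹ = 1 := Matrix.mul_nonsing_inv _ hdet
  refine ContinuousLinearMap.opNorm_le_bound _ (by positivity) fun y => ?_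
  have hb := key ω (Matrix.toEuclideanCLM (𝕜 := ℂ) M⁻¹ y)
  have hS : Matrix.toEuclideanCLM (𝕜 := ℂ) M (Matrix.toEuclideanCLM (𝕜 := ℂ) M⁻¹ y) = y := by
    have h1 := congrArg (fun N => Matrix.toEuclideanCLM (𝕜 := ℂ) N y) hMinv
    simpa [map_mul, ContinuousLinearMap.mul_apply] using h1
  rw [hS] at hb
  rw [div_mul_eq_mul_div, le_div_iff₀ h3]
  nlinarith [hb, norm_nonneg (Matrix.toEuclideanCLM (𝕜 := ℂ) M⁻¹ y), norm_nonneg y]
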